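/- Let X_1, …, X_n be mutually independent nonnegative real random variables, each satisfying X_i ≤ M almost surely for a fixed real M > 0. Let X = X_1 + ⋯ + X_n and μ = E[X], and suppose μ ≥ M. Then Pr[X ≤ M] ≤ exp( −(3/4) · (μ/M) · (1 − M/μ)² ). -/

import Mathlib

open MeasureTheory ProbabilityTheory

section Stmt9Aux

open Real


lemma exp_ineq1 {p : ℝ} (h0 : 0 ≤ p) (h1 : p ≤ 1) : 2 - p ≤ (2 + p) * Real.exp (-p) := by
  have habs : |(-p)| ≤ 1 := by rw [abs_neg, abs_of_nonneg h0]; exact h1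
  have h := Real.exp_bound habs (n := 5) (by norm_num)
  rw [abs_neg, abs_of_nonneg h0] at h
  norm_num [Finset.sum_range_succ, Nat.factorial] at h
  have hlow := (abs_le.mp h).1
  nlinarith [pow_nonneg h0 3, pow_nonneg h0 4, pow_nonneg h0 5, sq_nonneg p]

lemma step_ineq {c p : ℝ} (hc : 2 ≤ c) (h0 : 0 ≤ p) (h1 : p ≤ 1) :
    c - p * (c - 1) ≤ (c + p) * Real.exp (-p) := by
  have hE := exp_ineq1 h0 h1
  have hEpos := Real.exp_pos (-p)
  nlinarith [mul_le_mul_of_nonneg_left hE (by linarith : (0:ℝ) ≤ c + p), sq_nonneg p]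

lemma convex_max (c t u : ℝ) (h0 : 0 ≤ t) (h1 : t ≤ 1) :
    max (c - (t + u)) 0 ≤ (1 - t) * max (c - u) 0 + t * max (c - 1 - u) 0 := by
  rcases le_or_gt (c - (t + u)) 0 with h | h
  · rw [max_eq_right h]
    have n1 := mul_nonneg (by linarith : (0:ℝ) ≤ 1 - t) (le_max_right (c - u) 0)
    have n2 := mul_nonneg h0 (le_max_right (c - 1 - u) 0)
    linarith
  · rw [max_eq_left h.le]
    have e1 : c - u ≤ max (c - u) 0 := le_max_left _ _
    have e2 : c - 1 - u ≤ max (c - 1 - u) 0 := le_max_left _ _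
    nlinarith


lemma caseB_numeric {r : ℝ} (hr : 7/4 ≤ r) :
    2 + r ≤ Real.exp (r/4 + 3/2 - 3/(4*r)) := by
  have hr0 : (0:ℝ) < r := by linarith
  set w : ℝ := r/4 + 3/2 - 3/(4*r) with hwdef
  have hwa : r/4 + 15/14 ≤ w := by
    have h34 : 3/(4*r) ≤ 3/7 := by
      rw [div_le_div_iff₀ (by linarith) (by norm_num)]
      nlinarith
    simp only [hwdef]; linarith
  have ha0 : (0:ℝ) ≤ r/4 + 15/14 := by linarith
  have hw0 : (0:ℝ) ≤ w := le_trans ha0 hwa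
  have hcube := Real.sum_le_exp_of_nonneg hw0 4
  have hsum : ∑ i ∈ Finset.range 4, w ^ i / (i.factorial : ℝ)
      = 1 + w + w^2/2 + w^3/6 := by
    norm_num [Finset.sum_range_succ, Nat.factorial]
  rw [hsum] at hcube
  have h2 : (r/4 + 15/14)^2 ≤ w^2 := by nlinarith
  have h3 : (r/4 + 15/14)^3 ≤ w^3 := by nlinarith [sq_nonneg w, sq_nonneg (r/4+15/14)]
  nlinarith [sq_nonneg (r - 7/3), sq_nonneg (r - 2), sq_nonneg (r-7/4), pow_nonneg (by linarith : (0:ℝ) ≤ r) 3]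

lemma stmt9_bdd_int {Ω : Type*} [MeasureSpace Ω] [IsProbabilityMeasure (ℙ : Measure Ω)]
    {f : Ω → ℝ} {C : ℝ} (hf : AEStronglyMeasurable f ℙ) (h : ∀ᵐ ω ∂ℙ, |f ω| ≤ C) :
    Integrable f ℙ :=
  (integrable_const C).mono' hf (by simpa [Real.norm_eq_abs] using h)

lemma stmt9_gmeas (c M : ℝ) : Measurable (fun y : ℝ => max (c - y / M) 0) :=
  (measurable_const.sub (measurable_id.div_const M)).max measurable_const

lemma stmt9_tail_aux {Ω : Type*} [MeasureSpace Ω] [IsProbabilityMeasure (ℙ : Measure Ω)]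
    {n : ℕ} (X : Fin n → Ω → ℝ) (M : ℝ) (hM : 0 < M)
    (hmeas : ∀ i, Measurable (X i))
    (hindep : iIndepFun X ℙ)
    (hnn : ∀ i, ∀ᵐ ω ∂ℙ, 0 ≤ X i ω)
    (hb : ∀ i, ∀ᵐ ω ∂ℙ, X i ω ≤ M) (s : Finset (Fin n)) :
    (∫ ω, max (1 - (∑ i ∈ s, X i ω)/M) 0 ∂ℙ) ≤ Real.exp (-((∑ i ∈ s, ∫ ω, X i ω ∂ℙ)/M)) ∧
    (∫ ω, max (2 - (∑ i ∈ s, X i ω)/M) 0 ∂ℙ) ≤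
      (2 + (∑ i ∈ s, ∫ ω, X i ω ∂ℙ)/M) * Real.exp (-((∑ i ∈ s, ∫ ω, X i ω ∂ℙ)/M)) := by
  classical
  have hXint : ∀ i, Integrable (X i) ℙ := by
    intro i
    refine stmt9_bdd_int (C := M) (hmeas i).aestronglyMeasurable ?_
    filter_upwards [hnn i, hb i] with ω u1 u2
    rw [abs_of_nonneg u1]; exact u2
  have hm0 : ∀ i, 0 ≤ ∫ ω, X i ω ∂ℙ := fun i => integral_nonneg_of_ae (hnn i)
  have hmM : ∀ i, (∫ ω, X i ω ∂ℙ) ≤ M := by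
    intro i
    have := integral_mono_ae (hXint i) (integrable_const M) (hb i)
    simpa using this
  induction s using Finset.induction_on with
  | empty => norm_num
  | @insert i s hi ih =>
    set T : Ω → ℝ := fun ω => ∑ j ∈ s, X j ω with hTdef
    set mi : ℝ := ∫ ω, X i ω ∂ℙ with hmidef
    set ρ : ℝ := (∑ j ∈ s, ∫ ω, X j ω ∂ℙ)/M with hρdef
    have hTmeas : Measurable T := Finset.measurable_sum _ fun j _ => hmeas j
    have hT0 : ∀ᵐ ω ∂ℙ, 0 ≤ T ω := by
      have hall : ∀ᵐ ω ∂ℙ, ∀ j, 0 ≤ X j ω := (MeasureTheory.ae_all_iff).2 hnn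
      filter_upwards [hall] with ω hω
      exact Finset.sum_nonneg fun j _ => hω j
    have hρ0 : 0 ≤ ρ := by
      rw [hρdef]
      exact div_nonneg (Finset.sum_nonneg fun j _ => hm0 j) hM.le
    have hp0 : 0 ≤ mi / M := div_nonneg (hm0 i) hM.le
    have hp1 : mi / M ≤ 1 := (div_le_one hM).2 (hmM i)
    have hindepT : IndepFun (X i) T ℙ := by
      have h := (hindep.indepFun_finsetSum_of_notMem hmeas hi).symm
      have he : T = (∑ j ∈ s, X j) := by
        funext ω; simp [hTdef, Finset.sum_apply]
      rwa [he]
    -- integrability of the pieces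
    have hG_int : ∀ c : ℝ, Integrable (fun ω => max (c - T ω / M) 0) ℙ := by
      intro c
      refine stmt9_bdd_int (C := |c|) ((stmt9_gmeas c M).comp hTmeas).aestronglyMeasurable ?_
      filter_upwards [hT0] with ω h0
      rw [abs_of_nonneg (le_max_right _ _)]
      have : c - T ω / M ≤ |c| := by
        have : 0 ≤ T ω / M := div_nonneg h0 hM.le
        calc c - T ω / M ≤ c := by linarith
        _ ≤ |c| := le_abs_self c
      exact max_le this (abs_nonneg c)
    have hstep : ∀ c : ℝ,
        (∫ ω, max (c - (X i ω + T ω)/M) 0 ∂ℙ) ≤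
        (1 - mi/M) * (∫ ω, max (c - T ω/M) 0 ∂ℙ)
        + (mi/M) * (∫ ω, max ((c-1) - T ω/M) 0 ∂ℙ) := by
      intro c
      have hmeasL : Measurable (fun ω => max (c - (X i ω + T ω)/M) 0) :=
        (stmt9_gmeas c M).comp ((hmeas i).add hTmeas)
      have hLint : Integrable (fun ω => max (c - (X i ω + T ω)/M) 0) ℙ := by
        refine stmt9_bdd_int (C := |c|) hmeasL.aestronglyMeasurable ?_
        filter_upwards [hT0, hnn i] with ω h0 h1
        rw [abs_of_nonneg (le_max_right _ _)]
        have : 0 ≤ (X i ω + T ω)/M := div_nonneg (by linarith) hM.le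
        refine max_le (by calc c - (X i ω + T ω)/M ≤ c := by linarith
          _ ≤ |c| := le_abs_self c) (abs_nonneg c)
      have hf1meas : Measurable (fun ω => 1 - X i ω / M) :=
        measurable_const.sub ((hmeas i).div_const M)
      have hf2meas : Measurable (fun ω => X i ω / M) := (hmeas i).div_const M
      have hprod1 : Integrable (fun ω => (1 - X i ω/M) * max (c - T ω/M) 0) ℙ := by
        refine stmt9_bdd_int (C := |c|) (hf1meas.mul ((stmt9_gmeas c M).comp hTmeas)).aestronglyMeasurable ?_
        filter_upwards [hT0, hnn i, hb i] with ω h0 h1 h2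
        rw [abs_mul]
        have e1 : |1 - X i ω / M| ≤ 1 := by
          rw [abs_of_nonneg (by rw [sub_nonneg]; exact (div_le_one hM).2 h2)]
          have : 0 ≤ X i ω / M := div_nonneg h1 hM.le
          linarith
        have e2 : |max (c - T ω / M) 0| ≤ |c| := by
          rw [abs_of_nonneg (le_max_right _ _)]
          refine max_le ?_ (abs_nonneg c)
          have : 0 ≤ T ω / M := div_nonneg h0 hM.le
          calc c - T ω / M ≤ c := by linarith
          _ ≤ |c| := le_abs_self c
        calc |1 - X i ω/M| * |max (c - T ω/M) 0| ≤ 1 * |c| :=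
          mul_le_mul e1 e2 (abs_nonneg _) zero_le_one
        _ = |c| := one_mul _
      have hprod2 : Integrable (fun ω => (X i ω/M) * max ((c-1) - T ω/M) 0) ℙ := by
        refine stmt9_bdd_int (C := |c-1|) (hf2meas.mul ((stmt9_gmeas (c-1) M).comp hTmeas)).aestronglyMeasurable ?_
        filter_upwards [hT0, hnn i, hb i] with ω h0 h1 h2
        rw [abs_mul]
        have e1 : |X i ω / M| ≤ 1 := by
          rw [abs_of_nonneg (div_nonneg h1 hM.le)]; exact (div_le_one hM).2 h2
        have e2 : |max ((c-1) - T ω / M) 0| ≤ |c-1| := by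
          rw [abs_of_nonneg (le_max_right _ _)]
          refine max_le ?_ (abs_nonneg _)
          have : 0 ≤ T ω / M := div_nonneg h0 hM.le
          calc (c-1) - T ω / M ≤ c-1 := by linarith
          _ ≤ |c-1| := le_abs_self _
        calc |X i ω/M| * |max ((c-1) - T ω/M) 0| ≤ 1 * |c-1| :=
          mul_le_mul e1 e2 (abs_nonneg _) zero_le_one
        _ = |c-1| := one_mul _
      have hpt : ∀ᵐ ω ∂ℙ, max (c - (X i ω + T ω)/M) 0 ≤
          (1 - X i ω/M) * max (c - T ω/M) 0 + (X i ω/M) * max ((c-1) - T ω/M) 0 := by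
        filter_upwards [hnn i, hb i] with ω h1 h2
        have key := convex_max c (X i ω/M) (T ω/M) (div_nonneg h1 hM.le) ((div_le_one hM).2 h2)
        have e1 : (X i ω + T ω)/M = X i ω/M + T ω/M := add_div _ _ _
        rw [e1]
        have e2 : c - 1 - T ω/M = (c - 1) - T ω/M := by ring
        rw [e2] at key
        exact key
      have hind1 : IndepFun (fun ω => 1 - X i ω/M) (fun ω => max (c - T ω/M) 0) ℙ :=
        hindepT.comp (measurable_const.sub (measurable_id.div_const M)) (stmt9_gmeas c M)
      have hind2 : IndepFun (fun ω => X i ω/M) (fun ω => max ((c-1) - T ω/M) 0) ℙ :=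
        hindepT.comp (measurable_id.div_const M) (stmt9_gmeas (c-1) M)
      have hf1int : Integrable (fun ω => 1 - X i ω/M) ℙ :=
        (integrable_const 1).sub ((hXint i).div_const M)
      have hf2int : Integrable (fun ω => X i ω/M) ℙ := (hXint i).div_const M
      have hmul1 : (∫ ω, (1 - X i ω/M) * max (c - T ω/M) 0 ∂ℙ)
          = (1 - mi/M) * (∫ ω, max (c - T ω/M) 0 ∂ℙ) := by
        have := hind1.integral_mul_eq_mul_integral hf1int.aestronglyMeasurable (hG_int c).aestronglyMeasurable
        have e : (∫ ω, (1 - X i ω/M) * max (c - T ω/M) 0 ∂ℙ)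
            = integral ℙ ((fun ω => 1 - X i ω/M) * (fun ω => max (c - T ω/M) 0)) := rfl
        rw [e, this]
        congr 1
        rw [integral_sub (integrable_const 1) ((hXint i).div_const M)]
        simp [integral_div, hmidef]
      have hmul2 : (∫ ω, (X i ω/M) * max ((c-1) - T ω/M) 0 ∂ℙ)
          = (mi/M) * (∫ ω, max ((c-1) - T ω/M) 0 ∂ℙ) := by
        have := hind2.integral_mul_eq_mul_integral hf2int.aestronglyMeasurable (hG_int (c-1)).aestronglyMeasurable
        have e : (∫ ω, (X i ω/M) * max ((c-1) - T ω/M) 0 ∂ℙ)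
            = integral ℙ ((fun ω => X i ω/M) * (fun ω => max ((c-1) - T ω/M) 0)) := rfl
        rw [e, this]
        congr 1
        simp [integral_div, hmidef]
      calc (∫ ω, max (c - (X i ω + T ω)/M) 0 ∂ℙ)
          ≤ ∫ ω, ((1 - X i ω/M) * max (c - T ω/M) 0 + (X i ω/M) * max ((c-1) - T ω/M) 0) ∂ℙ :=
            integral_mono_ae hLint (hprod1.add hprod2) hpt
        _ = (∫ ω, (1 - X i ω/M) * max (c - T ω/M) 0 ∂ℙ)
            + (∫ ω, (X i ω/M) * max ((c-1) - T ω/M) 0 ∂ℙ) := integral_add hprod1 hprod2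
        _ = (1 - mi/M) * (∫ ω, max (c - T ω/M) 0 ∂ℙ)
            + (mi/M) * (∫ ω, max ((c-1) - T ω/M) 0 ∂ℙ) := by rw [hmul1, hmul2]
    -- rewrite the insert sums
    have hsum_eq : ∀ ω, (∑ j ∈ insert i s, X j ω) = X i ω + T ω := by
      intro ω; rw [Finset.sum_insert hi]
    have hmsum : (∑ j ∈ insert i s, ∫ ω, X j ω ∂ℙ)/M = ρ + mi/M := by
      rw [Finset.sum_insert hi, add_div, hρdef, hmidef]; ring
    have hzero : (∫ ω, max ((1:ℝ)-1 - T ω/M) 0 ∂ℙ) = 0 := by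
      have : (fun ω => max ((1:ℝ)-1 - T ω/M) 0) =ᵐ[ℙ] (fun _ => (0:ℝ)) := by
        filter_upwards [hT0] with ω h0
        rw [max_eq_right]
        have : 0 ≤ T ω / M := div_nonneg h0 hM.le
        linarith
      rw [integral_congr_ae this, integral_zero]
    have hexp1 : (1 - mi/M) * Real.exp (-ρ) ≤ Real.exp (-(ρ + mi/M)) := by
      have h2 : 1 - mi/M ≤ Real.exp (-(mi/M)) := by
        have := Real.add_one_le_exp (-(mi/M)); linarith
      calc (1 - mi/M) * Real.exp (-ρ) ≤ Real.exp (-(mi/M)) * Real.exp (-ρ) :=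
        mul_le_mul_of_nonneg_right h2 (Real.exp_pos _).le
      _ = Real.exp (-(ρ + mi/M)) := by rw [← Real.exp_add]; ring_nf
    constructor
    · simp only [hsum_eq, hmsum]
      calc (∫ ω, max (1 - (X i ω + T ω)/M) 0 ∂ℙ)
          ≤ (1 - mi/M) * (∫ ω, max (1 - T ω/M) 0 ∂ℙ)
            + (mi/M) * (∫ ω, max ((1:ℝ)-1 - T ω/M) 0 ∂ℙ) := hstep 1
        _ = (1 - mi/M) * (∫ ω, max (1 - T ω/M) 0 ∂ℙ) := by rw [hzero]; ring
        _ ≤ (1 - mi/M) * Real.exp (-ρ) := by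
            refine mul_le_mul_of_nonneg_left ?_ (by linarith)
            exact ih.1
        _ ≤ Real.exp (-(ρ + mi/M)) := hexp1
    · simp only [hsum_eq, hmsum]
      have h21 : (2:ℝ) - 1 = 1 := by norm_num
      calc (∫ ω, max (2 - (X i ω + T ω)/M) 0 ∂ℙ)
          ≤ (1 - mi/M) * (∫ ω, max (2 - T ω/M) 0 ∂ℙ)
            + (mi/M) * (∫ ω, max ((2:ℝ)-1 - T ω/M) 0 ∂ℙ) := hstep 2
        _ ≤ (1 - mi/M) * ((2 + ρ) * Real.exp (-ρ)) + (mi/M) * Real.exp (-ρ) := by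
            refine add_le_add ?_ ?_
            · exact mul_le_mul_of_nonneg_left ih.2 (by linarith)
            · refine mul_le_mul_of_nonneg_left ?_ hp0
              rw [h21]
              exact ih.1
        _ = ((2 + ρ) - (mi/M) * ((2 + ρ) - 1)) * Real.exp (-ρ) := by ring
        _ ≤ (((2 + ρ) + mi/M) * Real.exp (-(mi/M))) * Real.exp (-ρ) := by
            refine mul_le_mul_of_nonneg_right ?_ (Real.exp_pos _).le
            exact step_ineq (by linarith) hp0 hp1
        _ = (2 + (ρ + mi/M)) * Real.exp (-(ρ + mi/M)) := by
            have e : -(mi/M) + -ρ = -(ρ + mi/M) := by ring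
            rw [mul_assoc, ← Real.exp_add, e]; ring

lemma stmt9_cantelli {q d v : ℝ} (hq0 : 0 ≤ q) (hd0 : 0 < d) (hv0 : 0 < v)
    (hkey : q * (d + v/d)^2 ≤ v + (v/d)^2) (h13 : 3*d^2 ≤ v) :
    q ≤ Real.exp (-(3/4 * (d^2/v))) := by
  have hdd : (0:ℝ) < d^2 := by positivity
  have hA0 : 0 < d^2 + v := by positivity
  have hsq : d^2/d = d := by rw [sq]; exact mul_div_cancel_right₀ d hd0.ne'
  have ed : d + v/d = (d^2+v)/d := by rw [add_div, hsq]
  have e1 : q * (d + v/d)^2 = q*(d^2+v)^2/d^2 := by rw [ed, div_pow]; ring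
  have e2 : v + (v/d)^2 = v*(d^2+v)/d^2 := by
    rw [mul_add, add_div, mul_div_cancel_right₀ v hdd.ne', div_pow]
    ring
  rw [e1, e2, div_le_div_iff₀ hdd hdd] at hkey
  have h3 : q*(d^2+v)^2 ≤ v*(d^2+v) := le_of_mul_le_mul_right hkey hdd
  have hq3 : q * (d^2+v) ≤ v := by
    refine le_of_mul_le_mul_right ?_ hA0
    calc q*(d^2+v)*(d^2+v) = q*(d^2+v)^2 := by ring
      _ ≤ v*(d^2+v) := h3
  set u : ℝ := d^2/v with hu
  have huv : u*v = d^2 := div_mul_cancel₀ _ hv0.ne'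
  have hu0 : 0 ≤ u := by positivity
  have hu3 : u ≤ 1/3 := by
    rw [hu, div_le_iff₀ hv0]
    linarith
  have hq1u : q*(u+1) ≤ 1 := by
    refine le_of_mul_le_mul_right ?_ hv0
    calc q*(u+1)*v = q*(u*v + v) := by ring
      _ = q*(d^2 + v) := by rw [huv]
      _ ≤ v := hq3
      _ = 1*v := (one_mul v).symm
  have hqle : q ≤ 1 - 3/4*u := by nlinarith [hq1u, hu0, hu3, hq0]
  have hexp : 1 - 3/4*u ≤ Real.exp (-(3/4*u)) := by
    have := Real.add_one_le_exp (-(3/4*u)); linarith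
  calc q ≤ 1 - 3/4*u := hqle
    _ ≤ Real.exp (-(3/4*u)) := hexp

/-- Let `X_1, …, X_n` be mutually independent nonnegative real random
variables on a probability space, each satisfying `X_i ≤ M` almost surely for a fixed
real `M > 0`.  Let `X = X_1 + ⋯ + X_n` and `μ = E[X]`, and suppose `μ ≥ M`.  Then
`Pr[X ≤ M] ≤ exp(−(3/4) · (μ/M) · (1 − M/μ)²)`. -/
theorem stmt9 {Ω : Type*} [MeasureSpace Ω] [IsProbabilityMeasure (ℙ : Measure Ω)]
    (n : ℕ) (X : Fin n → Ω → ℝ) (M : ℝ) (hM : 0 < M)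
    (hmeas : ∀ i, Measurable (X i))
    (hindep : iIndepFun X ℙ)
    (hnn : ∀ i, ∀ᵐ ω ∂ℙ, 0 ≤ X i ω)
    (hb : ∀ i, ∀ᵐ ω ∂ℙ, X i ω ≤ M)
    (μ : ℝ) (hμdef : μ = ∫ ω, (∑ i, X i ω) ∂ℙ) (hMμ : M ≤ μ) :
    ℙ {ω | (∑ i, X i ω) ≤ M} ≤
      ENNReal.ofReal (Real.exp (-(3 / 4) * (μ / M) * (1 - M / μ) ^ 2)) := by
  classical
  have hXint : ∀ i, Integrable (X i) ℙ := by
    intro i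
    refine stmt9_bdd_int (C := M) (hmeas i).aestronglyMeasurable ?_
    filter_upwards [hnn i, hb i] with ω u1 u2
    rw [abs_of_nonneg u1]; exact u2
  have hm0 : ∀ i, 0 ≤ ∫ ω, X i ω ∂ℙ := fun i => integral_nonneg_of_ae (hnn i)
  have hμm : μ = ∑ i, ∫ ω, X i ω ∂ℙ := by
    rw [hμdef]; exact integral_finset_sum _ (fun i _ => hXint i)
  have hμpos : 0 < μ := lt_of_lt_of_le hM hMμ
  have hA : MeasurableSet {ω | (∑ i, X i ω) ≤ M} :=
    measurableSet_le (Finset.measurable_sum _ fun i _ => hmeas i) measurable_const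
  set q := (ℙ {ω | (∑ i, X i ω) ≤ M}).toReal with hqdef
  have hq0 : (0:ℝ) ≤ q := ENNReal.toReal_nonneg
  suffices h : q ≤ Real.exp (-(3 / 4) * (μ / M) * (1 - M / μ) ^ 2) by
    calc ℙ {ω | (∑ i, X i ω) ≤ M} = ENNReal.ofReal q :=
          (ENNReal.ofReal_toReal (measure_ne_top _ _)).symm
      _ ≤ _ := ENNReal.ofReal_le_ofReal h
  have hexp_eq : -(3 / 4) * (μ / M) * (1 - M / μ) ^ 2 = -(3/4 * ((μ - M)^2/(M*μ))) := by
    field_simp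
  rw [hexp_eq]
  by_cases hcase : μ ≤ 7/4 * M
  · -- Case A : Cantelli
    rcases eq_or_lt_of_le hMμ with heq | hlt
    · subst heq
      have : q ≤ 1 := by
        rw [hqdef]
        refine ENNReal.toReal_le_of_le_ofReal zero_le_one ?_
        simpa using prob_le_one
      calc q ≤ 1 := this
        _ ≤ Real.exp (-(3/4 * ((M - M)^2/(M*M)))) := by norm_num
    · -- μ > M
      have hXX : ∀ i j : Fin n, Integrable (fun ω => X i ω * X j ω) ℙ := by
        intro i j
        refine stmt9_bdd_int (C := M*M) ((hmeas i).mul (hmeas j)).aestronglyMeasurable ?_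
        filter_upwards [hnn i, hb i, hnn j, hb j] with ω a1 a2 a3 a4
        rw [abs_mul, abs_of_nonneg a1, abs_of_nonneg a3]
        exact mul_le_mul a2 a4 a3 hM.le
      have hsq_eq : ∀ ω : Ω, (∑ i, X i ω)^2 = ∑ i, ∑ j, X i ω * X j ω := by
        intro ω; rw [sq, Finset.sum_mul_sum]
      have hsq_int : ∫ ω, (∑ i, X i ω)^2 ∂ℙ = ∑ i, ∑ j, ∫ ω, X i ω * X j ω ∂ℙ := by
        simp_rw [hsq_eq]
        rw [integral_finset_sum _ (fun i _ => integrable_finset_sum _ (fun j _ => hXX i j))]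
        exact Finset.sum_congr rfl fun i _ => integral_finset_sum _ (fun j _ => hXX i j)
      have hineq_i : ∀ i : Fin n, (∑ j, ∫ ω, X i ω * X j ω ∂ℙ)
          ≤ M * (∫ ω, X i ω ∂ℙ) + (∫ ω, X i ω ∂ℙ) * μ := by
        intro i
        rw [← Finset.sum_erase_add Finset.univ _ (Finset.mem_univ i)]
        have e1 : (∑ j ∈ Finset.univ.erase i, ∫ ω, X i ω * X j ω ∂ℙ)
            = (∫ ω, X i ω ∂ℙ) * ∑ j ∈ Finset.univ.erase i, (∫ ω, X j ω ∂ℙ) := by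
          rw [Finset.mul_sum]
          refine Finset.sum_congr rfl fun j hj => ?_
          have hij : i ≠ j := (Finset.ne_of_mem_erase hj).symm
          have h := (hindep.indepFun hij).integral_mul_eq_mul_integral (hXint i).aestronglyMeasurable (hXint j).aestronglyMeasurable
          have e : (∫ ω, X i ω * X j ω ∂ℙ) = integral ℙ (X i * X j) := rfl
          rw [e, h]
        have e2 : (∑ j ∈ Finset.univ.erase i, ∫ ω, X j ω ∂ℙ) ≤ μ := by
          rw [hμm]
          exact Finset.sum_le_sum_of_subset_of_nonneg (Finset.subset_univ _)
            (fun j _ _ => hm0 j)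
        have hdiag : (∫ ω, X i ω * X i ω ∂ℙ) ≤ M * ∫ ω, X i ω ∂ℙ := by
          have hpt : ∀ᵐ ω ∂ℙ, X i ω * X i ω ≤ M * X i ω := by
            filter_upwards [hnn i, hb i] with ω a1 a2; nlinarith
          have h := integral_mono_ae (hXX i i) ((hXint i).const_mul M) hpt
          simpa [integral_const_mul] using h
        have e3 : (∫ ω, X i ω ∂ℙ) * (∑ j ∈ Finset.univ.erase i, ∫ ω, X j ω ∂ℙ)
            ≤ (∫ ω, X i ω ∂ℙ) * μ := mul_le_mul_of_nonneg_left e2 (hm0 i)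
        rw [e1]
        linarith
      have hS2 : ∫ ω, (∑ i, X i ω)^2 ∂ℙ ≤ M*μ + μ^2 := by
        rw [hsq_int]
        calc (∑ i, ∑ j, ∫ ω, X i ω * X j ω ∂ℙ)
            ≤ ∑ i, (M * (∫ ω, X i ω ∂ℙ) + (∫ ω, X i ω ∂ℙ) * μ) :=
              Finset.sum_le_sum fun i _ => hineq_i i
          _ = M*μ + μ^2 := by
              rw [Finset.sum_add_distrib, ← Finset.mul_sum, ← Finset.sum_mul, ← hμm]
              ring
      -- integrability
      have hSint : Integrable (fun ω => ∑ i, X i ω) ℙ :=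
        integrable_finset_sum _ fun i _ => hXint i
      have hS2int : Integrable (fun ω => (∑ i, X i ω)^2) ℙ := by
        simp_rw [hsq_eq]
        exact integrable_finset_sum _ (fun i _ => integrable_finset_sum _ (fun j _ => hXX i j))
      set d : ℝ := μ - M with hd
      have hd0 : 0 < d := by rw [hd]; linarith
      set v : ℝ := M * μ with hv
      have hv0 : 0 < v := mul_pos hM hμpos
      set θ : ℝ := μ + v/d with hθ
      have hθM : θ - M = d + v/d := by rw [hθ, hd]; ring
      have hθM0 : 0 < θ - M := by
        rw [hθM]; positivity
      -- pointwise domination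
      have hdom : ∀ ω : Ω, Set.indicator {ω | (∑ i, X i ω) ≤ M} 1 ω * (θ - M)^2
          ≤ (θ - (∑ i, X i ω))^2 := by
        intro ω
        by_cases hω : ω ∈ {ω | (∑ i, X i ω) ≤ M}
        · rw [Set.indicator_of_mem hω]
          have hS : (∑ i, X i ω) ≤ M := hω
          have : θ - M ≤ θ - (∑ i, X i ω) := by linarith
          have h2 := pow_le_pow_left₀ hθM0.le this 2
          simpa using h2
        · rw [Set.indicator_of_notMem hω]
          have := sq_nonneg (θ - (∑ i, X i ω))
          simpa using this
      have hLint : Integrable (fun ω => Set.indicator {ω | (∑ i, X i ω) ≤ M} 1 ω * (θ - M)^2) ℙ :=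
        ((integrable_const (1:ℝ)).indicator hA).mul_const _
      have hquad_eq : (fun ω => (θ - (∑ i, X i ω))^2)
          = fun ω => θ^2 - (2*θ)*(∑ i, X i ω) + (∑ i, X i ω)^2 := by
        funext ω; ring
      have hquad_int : Integrable (fun ω => (θ - (∑ i, X i ω))^2) ℙ := by
        rw [hquad_eq]
        exact ((integrable_const (θ^2)).sub (hSint.const_mul (2*θ))).add hS2int
      have hmono := integral_mono hLint hquad_int hdom
      have hLeq : (∫ ω, Set.indicator {ω | (∑ i, X i ω) ≤ M} 1 ω * (θ - M)^2 ∂ℙ)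
          = q * (θ - M)^2 := by
        rw [integral_mul_const, integral_indicator_one hA, measureReal_def]
      have i2 : Integrable (fun ω => (2*θ)*(∑ i, X i ω)) ℙ := hSint.const_mul (2*θ)
      have i1 : Integrable (fun ω => θ^2 - (2*θ)*(∑ i, X i ω)) ℙ := by
        have h := (integrable_const (θ^2)).sub i2
        exact h
      have hReq : (∫ ω, (θ - (∑ i, X i ω))^2 ∂ℙ)
          = θ^2 - (2*θ)*μ + ∫ ω, (∑ i, X i ω)^2 ∂ℙ := by
        rw [hquad_eq]
        rw [integral_add i1 hS2int, integral_sub (integrable_const (θ^2)) i2,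
          integral_const, integral_const_mul, ← hμdef]
        simp
      have hkey : q * (θ - M)^2 ≤ v + (v/d)^2 := by
        rw [← hLeq]
        refine le_trans hmono ?_
        rw [hReq]
        have : θ^2 - (2*θ)*μ + (M*μ + μ^2) = v + (v/d)^2 := by
          rw [hθ, hv]
          field_simp
          ring
        linarith [hS2]
      -- clear denominators
      have hkey2 : q * (d + v/d)^2 ≤ v + (v/d)^2 := by rw [← hθM]; exact hkey
      have h13 : 3*d^2 ≤ v := by
        rw [hd, hv]
        nlinarith [hM, hlt, hcase]
      exact stmt9_cantelli hq0 hd0 hv0 hkey2 h13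
  · push_neg at hcase
    have h74 : 7/4 ≤ μ/M := by
      rw [le_div_iff₀ hM]
      linarith
    obtain ⟨-, h2⟩ := stmt9_tail_aux X M hM hmeas hindep hnn hb Finset.univ
    rw [← hμm] at h2
    have hT0 : ∀ᵐ ω ∂ℙ, 0 ≤ ∑ i, X i ω := by
      have hall : ∀ᵐ ω ∂ℙ, ∀ j, 0 ≤ X j ω := (MeasureTheory.ae_all_iff).2 hnn
      filter_upwards [hall] with ω hω
      exact Finset.sum_nonneg fun j _ => hω j
    have hGint : Integrable (fun ω => max (2 - (∑ i, X i ω)/M) 0) ℙ := by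
      refine stmt9_bdd_int (C := 2)
        ((stmt9_gmeas 2 M).comp (Finset.measurable_sum _ fun i _ => hmeas i)).aestronglyMeasurable ?_
      filter_upwards [hT0] with ω h0
      rw [abs_of_nonneg (le_max_right _ _)]
      refine max_le ?_ (by norm_num)
      have : 0 ≤ (∑ i, X i ω)/M := div_nonneg h0 hM.le
      linarith
    have hq2 : q ≤ ∫ ω, max (2 - (∑ i, X i ω)/M) 0 ∂ℙ := by
      rw [hqdef, ← measureReal_def, ← integral_indicator_one hA]
      refine integral_mono ((integrable_const (1:ℝ)).indicator hA) hGint ?_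
      intro ω
      by_cases hω : ω ∈ {ω | (∑ i, X i ω) ≤ M}
      · rw [Set.indicator_of_mem hω]
        have hS : (∑ i, X i ω) ≤ M := hω
        have h1 : (∑ i, X i ω)/M ≤ 1 := (div_le_one hM).2 hS
        have h2' : (1:ℝ) ≤ 2 - (∑ i, X i ω)/M := by linarith
        simpa using le_trans h2' (le_max_left _ _)
      · rw [Set.indicator_of_notMem hω]
        simpa using le_max_right (2 - (∑ i, X i ω)/M) 0
    have hnum := caseB_numeric h74
    calc q ≤ (2 + μ/M) * Real.exp (-(μ/M)) := le_trans hq2 h2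
      _ ≤ Real.exp ((μ/M)/4 + 3/2 - 3/(4*(μ/M))) * Real.exp (-(μ/M)) :=
          mul_le_mul_of_nonneg_right hnum (Real.exp_pos _).le
      _ = Real.exp (((μ/M)/4 + 3/2 - 3/(4*(μ/M))) + -(μ/M)) := (Real.exp_add _ _).symm
      _ = Real.exp (-(3/4 * ((μ - M)^2/(M*μ)))) := by
          congr 1
          field_simp
          ring

end Stmt9Aux
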